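/- The Hilbert transform of the function −log x on (0, 1/2] is given explicitly by φ(z) = (1/π) ∫₀^{1/2} (−log x)/(x − z) dx = −(1/π) Li₂(1/(2z)) + (1/π) log 2 · log(1 − 1/(2z)) for z ∈ ℂ \ [0, 1/2], where Li₂ is the dilogarithm. -/

import Mathlib

/-- The dilogarithm on `ℂ \ [1,+∞)`, given by the integral representation
`Li₂(w) = −∫₀¹ log(1 − w t)/t dt` (which agrees with `Σ_{n≥1} wⁿ/n²` on the
unit disc and is its analytic continuation). -/
noncomputable def Li2 (w : ℂ) : ℂ :=
  -∫ t in (0 : ℝ)..1, Complex.log (1 - w * (t : ℂ)) / (t : ℂ)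

open Set MeasureTheory Filter intervalIntegral Topology
namespace HilbertLogAux

variable {z : ℂ}

lemma hz_ne (hz : z ∉ (fun t : ℝ => (t : ℂ)) '' Set.Icc (0 : ℝ) (1 / 2)) : z ≠ 0 := by
  rintro rfl
  exact hz ⟨0, by norm_num, by norm_num⟩

lemma hden (hz : z ∉ (fun t : ℝ => (t : ℂ)) '' Set.Icc (0 : ℝ) (1 / 2)) :
    ∀ x ∈ Icc (0:ℝ) (1/2), (x:ℂ) - z ≠ 0 := by
  intro x hx h
  exact hz ⟨x, hx, by linear_combination h⟩

lemma slit (hz : z ∉ (fun t : ℝ => (t : ℂ)) '' Set.Icc (0 : ℝ) (1 / 2)) :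
    ∀ x ∈ Icc (0:ℝ) (1/2), (1:ℂ) - (x:ℂ)/z ∈ Complex.slitPlane := by
  intro x hx
  by_contra h
  rw [Complex.mem_slitPlane_iff, not_or, not_lt, not_ne_iff] at h
  obtain ⟨hre, him⟩ := h
  set u : ℂ := (x:ℂ)/z with hu
  have him' : u.im = 0 := by
    have : ((1:ℂ) - u).im = 0 := him
    simpa using this
  have hre' : 1 ≤ u.re := by
    have : ((1:ℂ) - u).re ≤ 0 := hre
    simp [Complex.sub_re] at this
    linarith
  have hz0 : z ≠ 0 := hz_ne hz
  have hu0 : u ≠ 0 := by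
    intro h0
    rw [h0] at hre'; simp at hre'; linarith
  have huz : (x:ℂ) = u * z := by
    rw [hu, div_mul_cancel₀ _ hz0]
  have hureal : u = (u.re : ℂ) := by
    apply Complex.ext <;> simp [him']
  have hzval : z = ((x / u.re : ℝ) : ℂ) := by
    have hure : (u.re:ℂ) ≠ 0 := by
      rw [← hureal]; exact hu0
    push_cast
    rw [huz, hureal]
    field_simp
    rw [Complex.ofReal_re, div_self hure]
  apply hz
  refine ⟨x / u.re, ⟨?_, ?_⟩, hzval.symm⟩
  · exact div_nonneg hx.1 (by linarith)
  · have h1 : x / u.re ≤ x := div_le_self hx.1 hre'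
    linarith [hx.2]


lemma hasDerivAt_k (hz : z ∉ (fun t : ℝ => (t : ℂ)) '' Set.Icc (0 : ℝ) (1 / 2))
    {x : ℝ} (hx : x ∈ Icc (0:ℝ) (1/2)) :
    HasDerivAt (fun y : ℝ => Complex.log (1 - (y:ℂ)/z)) (((x:ℂ) - z)⁻¹) x := by
  have hs := slit hz x hx
  have hz0 : z ≠ 0 := hz_ne hz
  have hne : (1:ℂ) - (x:ℂ)/z ≠ 0 := Complex.slitPlane_ne_zero hs
  have hxz : (x:ℂ) - z ≠ 0 := hden hz x hx
  have h1 : HasDerivAt (fun u : ℂ => 1 - u/z) (-(z⁻¹)) (x:ℂ) := by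
    simpa using ((hasDerivAt_id (x:ℂ)).div_const z).const_sub 1
  have h2 := (Complex.hasDerivAt_log hs).comp (x:ℂ) h1
  have h3 := h2.comp_ofReal
  convert h3 using 1
  · rfl
  have hmul : ((1:ℂ) - (x:ℂ)/z) * (-z) = (x:ℂ) - z := by
    field_simp
    ring
  rw [← hmul, mul_inv, inv_neg]

lemma hasDerivAt_G (hz : z ∉ (fun t : ℝ => (t : ℂ)) '' Set.Icc (0 : ℝ) (1 / 2))
    {x : ℝ} (hx0 : 0 < x) (hx : x ∈ Icc (0:ℝ) (1/2)) :
    HasDerivAt (fun y : ℝ => (Real.log y : ℂ) * Complex.log (1 - (y:ℂ)/z))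
      (Complex.log (1 - (x:ℂ)/z) * (x:ℂ)⁻¹ + (Real.log x : ℂ) * ((x:ℂ)-z)⁻¹) x := by
  have hlog : HasDerivAt (fun y : ℝ => (Real.log y : ℂ)) ((x⁻¹ : ℝ) : ℂ) x :=
    (Real.hasDerivAt_log hx0.ne').ofReal_comp
  have := hlog.mul (hasDerivAt_k hz hx)
  convert this using 1
  · rfl
  · rfl
  push_cast
  ring


lemma contOn_inv (hz : z ∉ (fun t : ℝ => (t : ℂ)) '' Set.Icc (0 : ℝ) (1 / 2)) :
    ContinuousOn (fun x : ℝ => ((x:ℂ) - z)⁻¹) (Icc (0:ℝ) (1/2)) := fun x hx =>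
  (((Complex.continuous_ofReal.sub continuous_const).continuousAt).inv₀
    (hden hz x hx)).continuousWithinAt

lemma contOn_k (hz : z ∉ (fun t : ℝ => (t : ℂ)) '' Set.Icc (0 : ℝ) (1 / 2)) :
    ContinuousOn (fun y : ℝ => Complex.log (1 - (y:ℂ)/z)) (Icc (0:ℝ) (1/2)) := fun x hx =>
  (ContinuousAt.clog
    ((continuous_const.sub (Complex.continuous_ofReal.div_const z)).continuousAt)
    (slit hz x hx)).continuousWithinAt

lemma k_bound (hz : z ∉ (fun t : ℝ => (t : ℂ)) '' Set.Icc (0 : ℝ) (1 / 2)) :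
    ∃ C : ℝ, 0 ≤ C ∧ (∀ x ∈ Icc (0:ℝ) (1/2), ‖((x:ℂ) - z)⁻¹‖ ≤ C) ∧
      ∀ x ∈ Icc (0:ℝ) (1/2), ‖Complex.log (1 - (x:ℂ)/z)‖ ≤ C * x := by
  obtain ⟨C, hC⟩ := (isCompact_Icc (a := (0:ℝ)) (b := 1/2)).exists_bound_of_continuousOn
    (contOn_inv hz)
  have hC0 : 0 ≤ C := (norm_nonneg _).trans (hC 0 ⟨le_refl 0, by norm_num⟩)
  refine ⟨C, hC0, hC, ?_⟩
  intro x hx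
  have := norm_image_sub_le_of_norm_deriv_le_segment'
    (f := fun y : ℝ => Complex.log (1 - (y:ℂ)/z)) (f' := fun y : ℝ => ((y:ℂ) - z)⁻¹)
    (fun y hy => (hasDerivAt_k hz hy).hasDerivWithinAt)
    (fun y hy => hC y (Ico_subset_Icc_self hy)) x hx
  simpa using this

lemma hq_int (hz : z ∉ (fun t : ℝ => (t : ℂ)) '' Set.Icc (0 : ℝ) (1 / 2)) :
    IntervalIntegrable (fun x : ℝ => Complex.log (1 - (x:ℂ)/z) * (x:ℂ)⁻¹)
      volume 0 (1/2) := by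
  obtain ⟨C, hC0, -, hkb⟩ := k_bound hz
  rw [intervalIntegrable_iff_integrableOn_Ioc_of_le (by norm_num)]
  refine ⟨ContinuousOn.aestronglyMeasurable ?_ measurableSet_Ioc,
    HasFiniteIntegral.restrict_of_bounded (C := C) measure_Ioc_lt_top ?_⟩
  · refine ((contOn_k hz).mono Ioc_subset_Icc_self).mul (fun x hx => ?_)
    exact (Complex.continuous_ofReal.continuousAt.inv₀
      (Complex.ofReal_ne_zero.mpr hx.1.ne')).continuousWithinAt
  · rw [ae_restrict_iff' measurableSet_Ioc]
    filter_upwards with x hx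
    have h1 := hkb x (Ioc_subset_Icc_self hx)
    have hx0 : (0:ℝ) < x := hx.1
    rw [norm_mul, norm_inv, Complex.norm_real, Real.norm_eq_abs, abs_of_pos hx0]
    calc ‖Complex.log (1 - (x:ℂ)/z)‖ * x⁻¹ ≤ (C * x) * x⁻¹ :=
          mul_le_mul_of_nonneg_right h1 (inv_nonneg.mpr hx0.le)
      _ = C := by field_simp

lemma hlog_int : IntervalIntegrable Real.log volume 0 (1/2) := by
  have hrp : IntervalIntegrable (fun x : ℝ => 2 * x ^ (-(1/2) : ℝ)) volume 0 (1/2) := by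
    have := intervalIntegral.intervalIntegrable_rpow' (a := 0) (b := 1/2)
      (r := (-(1/2) : ℝ)) (by norm_num)
    simpa using this.const_mul 2
  apply hrp.mono_fun Real.measurable_log.aestronglyMeasurable
  filter_upwards [ae_restrict_mem measurableSet_uIoc] with x hx
  rw [Set.uIoc_of_le (by norm_num : (0:ℝ) ≤ 1/2)] at hx
  have hx0 : (0:ℝ) < x := hx.1
  have hrpos : (0:ℝ) < x ^ (-(1/2) : ℝ) := Real.rpow_pos_of_pos hx0 _
  have hlogle : Real.log x ≤ 0 := Real.log_nonpos hx0.le (by linarith [hx.2])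
  have key : -Real.log x ≤ 2 * x ^ (-(1/2) : ℝ) := by
    have h2 : Real.log (x ^ (-(1/2) : ℝ)) = -(1/2) * Real.log x := Real.log_rpow hx0 _
    have h3 : Real.log (x ^ (-(1/2) : ℝ)) ≤ x ^ (-(1/2) : ℝ) - 1 :=
      Real.log_le_sub_one_of_pos hrpos
    nlinarith
  rw [Real.norm_eq_abs, Real.norm_eq_abs, abs_of_nonpos hlogle,
    abs_of_pos (by positivity : (0:ℝ) < 2 * x ^ (-(1/2) : ℝ))]
  exact key

lemma hr_int (hz : z ∉ (fun t : ℝ => (t : ℂ)) '' Set.Icc (0 : ℝ) (1 / 2)) :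
    IntervalIntegrable (fun x : ℝ => (Real.log x : ℂ) * ((x:ℂ) - z)⁻¹)
      volume 0 (1/2) := by
  obtain ⟨C, hC0, hC, -⟩ := k_bound hz
  have hf : IntervalIntegrable (fun x : ℝ => C * |Real.log x|) volume 0 (1/2) :=
    hlog_int.abs.const_mul C
  apply hf.mono_fun
  · apply Measurable.aestronglyMeasurable
    apply (Complex.measurable_ofReal.comp Real.measurable_log).mul
    exact ((Complex.measurable_ofReal.sub measurable_const).inv)
  · filter_upwards [ae_restrict_mem measurableSet_uIoc] with x hx
    rw [Set.uIoc_of_le (by norm_num : (0:ℝ) ≤ 1/2)] at hx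
    have hxI : x ∈ Icc (0:ℝ) (1/2) := Ioc_subset_Icc_self hx
    rw [norm_mul, Complex.norm_real, Real.norm_eq_abs, Real.norm_eq_abs,
      abs_of_nonneg (by positivity : (0:ℝ) ≤ C * |Real.log x|)]
    calc |Real.log x| * ‖((x:ℂ) - z)⁻¹‖ ≤ |Real.log x| * C :=
          mul_le_mul_of_nonneg_left (hC x hxI) (abs_nonneg _)
      _ = C * |Real.log x| := mul_comm _ _


lemma step4 (hz : z ∉ (fun t : ℝ => (t : ℂ)) '' Set.Icc (0 : ℝ) (1 / 2))
    {ε : ℝ} (hε : ε ∈ Ioc (0:ℝ) (1/2)) :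
    (∫ x in ε..(1/2:ℝ),
      (Complex.log (1 - (x:ℂ)/z) * (x:ℂ)⁻¹ + (Real.log x : ℂ) * ((x:ℂ)-z)⁻¹))
      = (Real.log (1/2) : ℂ) * Complex.log (1 - (((1/2:ℝ)):ℂ)/z)
        - (Real.log ε : ℂ) * Complex.log (1 - (ε:ℂ)/z) := by
  have huIcc : uIcc ε (1/2:ℝ) = Icc ε (1/2) := uIcc_of_le hε.2
  have hsub : Icc ε (1/2:ℝ) ⊆ Icc 0 (1/2) := Icc_subset_Icc hε.1.le le_rfl
  refine intervalIntegral.integral_eq_sub_of_hasDerivAt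
    (f := fun y : ℝ => (Real.log y : ℂ) * Complex.log (1 - (y:ℂ)/z)) ?_ ?_
  · intro x hx
    rw [huIcc] at hx
    have hx0 : 0 < x := lt_of_lt_of_le hε.1 hx.1
    exact hasDerivAt_G hz hx0 ⟨hx0.le, hx.2⟩
  · apply ContinuousOn.intervalIntegrable
    rw [huIcc]
    have c1 : ContinuousOn (fun x : ℝ => ((x:ℂ))⁻¹) (Icc ε (1/2)) := fun x hx =>
      (Complex.continuous_ofReal.continuousAt.inv₀
        (Complex.ofReal_ne_zero.mpr (lt_of_lt_of_le hε.1 hx.1).ne')).continuousWithinAt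
    have c2 : ContinuousOn (fun x : ℝ => ((Real.log x : ℝ) : ℂ)) (Icc ε (1/2)) := fun x hx =>
      (Complex.continuous_ofReal.continuousAt.comp
        (Real.continuousAt_log (lt_of_lt_of_le hε.1 hx.1).ne')).continuousWithinAt
    exact (((contOn_k hz).mono hsub).mul c1).add (c2.mul ((contOn_inv hz).mono hsub))

lemma key (hz : z ∉ (fun t : ℝ => (t : ℂ)) '' Set.Icc (0 : ℝ) (1 / 2)) :
    (∫ x in (0:ℝ)..(1/2:ℝ), Complex.log (1 - (x:ℂ)/z) * (x:ℂ)⁻¹)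
      + (∫ x in (0:ℝ)..(1/2:ℝ), (Real.log x : ℂ) * ((x:ℂ)-z)⁻¹)
      = (Real.log (1/2) : ℂ) * Complex.log (1 - (((1/2:ℝ)):ℂ)/z) := by
  set H : ℝ → ℂ := fun x =>
    Complex.log (1 - (x:ℂ)/z) * (x:ℂ)⁻¹ + (Real.log x : ℂ) * ((x:ℂ)-z)⁻¹ with hH
  set G : ℝ → ℂ := fun y => (Real.log y : ℂ) * Complex.log (1 - (y:ℂ)/z) with hG
  have hHint : IntervalIntegrable H volume 0 (1/2) := (hq_int hz).add (hr_int hz)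
  set Φ : ℝ → ℂ := fun ε => ∫ x in ε..(1/2:ℝ), H x with hΦ
  have hIoc : IntegrableOn H (uIcc (0:ℝ) (1/2)) volume := by
    rw [uIcc_of_le (by norm_num : (0:ℝ) ≤ 1/2), integrableOn_Icc_iff_integrableOn_Ioc]
    rwa [intervalIntegrable_iff_integrableOn_Ioc_of_le (by norm_num : (0:ℝ) ≤ 1/2)] at hHint
  have hcont : ContinuousOn Φ (uIcc (0:ℝ) (1/2)) :=
    intervalIntegral.continuousOn_primitive_interval_left hIoc
  have hlim1 : Tendsto Φ (𝓝[>] (0:ℝ)) (𝓝 (Φ 0)) := by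
    have h1 : Tendsto Φ (𝓝[Ioc (0:ℝ) (1/2)] 0) (𝓝 (Φ 0)) :=
      (hcont 0 left_mem_uIcc).mono
        (by rw [uIcc_of_le (by norm_num : (0:ℝ) ≤ 1/2)]; exact Ioc_subset_Icc_self)
    rwa [nhdsWithin_Ioc_eq_nhdsGT (by norm_num : (0:ℝ) < 1/2)] at h1
  have hGlim : Tendsto G (𝓝[>] (0:ℝ)) (𝓝 0) := by
    have hk0 : HasDerivAt (fun y : ℝ => Complex.log (1 - (y:ℂ)/z)) ((((0:ℝ):ℂ) - z)⁻¹) 0 :=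
      hasDerivAt_k hz (by constructor <;> norm_num)
    have hslope := hasDerivAt_iff_tendsto_slope.mp hk0
    have hmono : 𝓝[>] (0:ℝ) ≤ 𝓝[≠] (0:ℝ) :=
      nhdsWithin_mono _ (fun x hx => ne_of_gt hx)
    have hslope' : Tendsto (fun ε : ℝ => (ε:ℂ)⁻¹ * Complex.log (1 - (ε:ℂ)/z)) (𝓝[>] (0:ℝ))
        (𝓝 ((((0:ℝ):ℂ) - z)⁻¹)) := by
      refine (hslope.mono_left hmono).congr' ?_
      filter_upwards [self_mem_nhdsWithin] with ε (hε : (0:ℝ) < ε)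
      simp [slope, Complex.real_smul, Complex.ofReal_inv]
    have hmul : Tendsto (fun ε : ℝ => ((Real.log ε * ε : ℝ) : ℂ)) (𝓝[>] (0:ℝ)) (𝓝 0) := by
      have h := tendsto_log_mul_rpow_nhdsGT_zero zero_lt_one
      simp only [Real.rpow_one] at h
      have h2 := (Complex.continuous_ofReal.tendsto (0:ℝ)).comp h
      simpa [Function.comp_def] using h2
    have hprod := hmul.mul hslope'
    rw [zero_mul] at hprod
    refine hprod.congr' ?_
    filter_upwards [self_mem_nhdsWithin] with ε (hε : (0:ℝ) < ε)
    have hε0 : (ε:ℂ) ≠ 0 := Complex.ofReal_ne_zero.mpr hε.ne'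
    push_cast
    field_simp
    ring
  have heq : (fun ε => G (1/2) - G ε) =ᶠ[𝓝[>] (0:ℝ)] Φ := by
    filter_upwards [Ioc_mem_nhdsGT (by norm_num : (0:ℝ) < 1/2)] with ε hε
    exact (step4 hz hε).symm
  have h2 : Tendsto (fun ε => G (1/2) - G ε) (𝓝[>] (0:ℝ)) (𝓝 (G (1/2) - 0)) :=
    tendsto_const_nhds.sub hGlim
  have hΦ0 : Φ 0 = G (1/2) - 0 := tendsto_nhds_unique (Tendsto.congr' heq.symm hlim1) h2
  rw [sub_zero] at hΦ0
  have hsplit : Φ 0 = (∫ x in (0:ℝ)..(1/2:ℝ), Complex.log (1 - (x:ℂ)/z) * (x:ℂ)⁻¹)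
      + (∫ x in (0:ℝ)..(1/2:ℝ), (Real.log x : ℂ) * ((x:ℂ)-z)⁻¹) :=
    intervalIntegral.integral_add (hq_int hz) (hr_int hz)
  rw [← hsplit]
  exact hΦ0

end HilbertLogAux


/-- Explicit formula for the Hilbert transform of `−log x` on `(0,1/2]`. -/
theorem hilbert_transform_log (z : ℂ)
    (hz : z ∉ (fun t : ℝ => (t : ℂ)) '' Set.Icc (0 : ℝ) (1 / 2)) :
    (1 / (Real.pi : ℂ)) * ∫ x in (0 : ℝ)..(1 / 2 : ℝ),
        (-(Real.log x) : ℂ) / ((x : ℂ) - z)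
      = -(1 / (Real.pi : ℂ)) * Li2 (1 / (2 * z))
        + (1 / (Real.pi : ℂ)) * (Real.log 2 : ℂ) * Complex.log (1 - 1 / (2 * z)) := by

  have hz0 : z ≠ 0 := HilbertLogAux.hz_ne hz
  have hLi2 : Li2 (1 / (2 * z))
      = -∫ x in (0:ℝ)..(1/2:ℝ), Complex.log (1 - (x:ℂ)/z) * (x:ℂ)⁻¹ := by
    rw [Li2]
    congr 1
    have hsub := intervalIntegral.smul_integral_comp_mul_left
      (f := fun t : ℝ => Complex.log (1 - (1/(2*z)) * (t:ℂ)) / (t:ℂ)) (a := 0) (b := 1/2) 2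
    rw [show (2:ℝ)*0 = 0 by norm_num, show (2:ℝ)*(1/2) = 1 by norm_num] at hsub
    rw [← hsub]
    have hpt : ∀ x : ℝ, Complex.log (1 - (1/(2*z)) * (((2*x : ℝ)):ℂ)) / (((2*x : ℝ)):ℂ)
        = (2:ℂ)⁻¹ * (Complex.log (1 - (x:ℂ)/z) * (x:ℂ)⁻¹) := by
      intro x
      have harg : (1:ℂ) - (1/(2*z)) * (((2*x : ℝ)):ℂ) = 1 - (x:ℂ)/z := by
        push_cast
        field_simp
      rw [harg]
      push_cast
      rw [div_eq_mul_inv, mul_inv]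
      ring
    simp only [hpt]
    rw [intervalIntegral.integral_const_mul, Complex.real_smul]
    push_cast
    ring
  have hkey := HilbertLogAux.key hz
  have hG12 : (Real.log (1/2) : ℂ) * Complex.log (1 - (((1/2:ℝ)):ℂ)/z)
      = -((Real.log 2 : ℂ) * Complex.log (1 - 1/(2*z))) := by
    have h1 : Real.log (1/2) = -Real.log 2 := by rw [one_div, Real.log_inv]
    have h2 : (((1/2:ℝ)):ℂ)/z = 1/(2*z) := by push_cast; rw [div_div]
    rw [h1, h2]
    push_cast
    ring
  rw [hG12] at hkey
  have hneg : (∫ x in (0:ℝ)..(1/2:ℝ), (-(Real.log x) : ℂ) / ((x:ℂ) - z))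
      = -∫ x in (0:ℝ)..(1/2:ℝ), (Real.log x : ℂ) * ((x:ℂ)-z)⁻¹ := by
    rw [← intervalIntegral.integral_neg]
    congr 1
    funext x
    rw [div_eq_mul_inv]
    ring
  rw [hneg]
  have hr_eq : (∫ x in (0:ℝ)..(1/2:ℝ), (Real.log x : ℂ) * ((x:ℂ)-z)⁻¹)
      = -((Real.log 2 : ℂ) * Complex.log (1 - 1/(2*z))) + Li2 (1/(2*z)) := by
    linear_combination hkey - hLi2
  rw [hr_eq]
  ring
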